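/- Suppose W ∈ ℝ^{n×k} satisfies the WDC with constant ε. Then for any nonzero x, y ∈ ℝ^k with θ = ∠(x, y): (i) ‖W_{+,x}^T (W_{+,x} − W_{+,y})‖ ≤ 2ε + θ in spectral norm, and (ii) ‖(W_{+,x} − W_{+,y}) y‖² ≤ 2(2ε + θ) ‖x − y‖². -/

import Mathlib

open scoped BigOperators NNReal
open Real Finset Matrix
open scoped Matrix

noncomputable section

namespace CSGen

/-- Euclidean norm of a vector in `ℝ^m`. -/
def enorm {m : ℕ} (v : Fin m → ℝ) : ℝ := Real.sqrt (∑ i, (v i) ^ 2)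

/-- Euclidean inner product. -/
def dotp {m : ℕ} (u v : Fin m → ℝ) : ℝ := ∑ i, u i * v i

/-- `relu` applied entrywise. -/
def relu {m : ℕ} (v : Fin m → ℝ) : Fin m → ℝ := fun i => max (v i) 0

/-- Zero out the rows of `W` at which the vector `v` is not positive. -/
def rowFilter {n k : ℕ} (W : Matrix (Fin n) (Fin k) ℝ) (v : Fin n → ℝ) :
    Matrix (Fin n) (Fin k) ℝ := fun i j => if 0 < v i then W i j else 0

/-- `W_{+,x} = diag(Wx > 0) W`. -/
def posPart {n k : ℕ} (W : Matrix (Fin n) (Fin k) ℝ) (x : Fin k → ℝ) :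
    Matrix (Fin n) (Fin k) ℝ := rowFilter W (W.mulVec x)

/-- Spectral norm of a matrix (operator norm w.r.t. Euclidean norms). -/
def specNorm {n k : ℕ} (M : Matrix (Fin n) (Fin k) ℝ) : ℝ :=
  ‖LinearMap.toContinuousLinearMap (Matrix.toEuclideanLin M)‖

/-- The angle `∠(x,y) = arccos(⟨x,y⟩/(‖x‖‖y‖))`. -/
def ang {k : ℕ} (x y : Fin k → ℝ) : ℝ :=
  Real.arccos (dotp x y / (enorm x * enorm y))

/-- The matrix of the linear map `M_{x̂↔ŷ}` sending `x̂ ↦ ŷ`, `ŷ ↦ x̂`, and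
`z ↦ 0` for `z ⊥ span{x,y}`. -/
def swapMat {k : ℕ} (x y : Fin k → ℝ) : Matrix (Fin k) (Fin k) ℝ :=
  let xh := (enorm x)⁻¹ • x
  let yh := (enorm y)⁻¹ • y
  let c := dotp xh yh
  if c = 1 then Matrix.vecMulVec xh xh
  else if c = -1 then -(Matrix.vecMulVec xh xh)
  else (1 - c ^ 2)⁻¹ •
    (Matrix.vecMulVec xh yh + Matrix.vecMulVec yh xh
      - c • (Matrix.vecMulVec xh xh + Matrix.vecMulVec yh yh))

/-- The matrix `Q_{x,y}`. -/
def Qmat {k : ℕ} (x y : Fin k → ℝ) : Matrix (Fin k) (Fin k) ℝ :=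
  ((π - ang x y) / (2 * π)) • (1 : Matrix (Fin k) (Fin k) ℝ)
    + (Real.sin (ang x y) / (2 * π)) • swapMat x y

/-- The Weight Distribution Condition with constant `ε`. -/
def WDC {n k : ℕ} (W : Matrix (Fin n) (Fin k) ℝ) (ε : ℝ) : Prop :=
  ∀ x y : Fin k → ℝ, x ≠ 0 → y ≠ 0 →
    specNorm ((posPart W x)ᵀ * posPart W y - Qmat x y) ≤ ε

/-- The Range Restricted Isometry Condition of `A` with respect to `G`,
with constant `ε`. -/
def RRIC {m nd k : ℕ} (A : Matrix (Fin m) (Fin nd) ℝ)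
    (G : (Fin k → ℝ) → (Fin nd → ℝ)) (ε : ℝ) : Prop :=
  ∀ x1 x2 x3 x4 : Fin k → ℝ,
    |dotp (A.mulVec (G x1 - G x2)) (A.mulVec (G x3 - G x4))
        - dotp (G x1 - G x2) (G x3 - G x4)|
      ≤ ε * enorm (G x1 - G x2) * enorm (G x3 - G x4)

/-- Output of the `j`-th layer of the network:
`feat n W d = G = relu(W_d ⋯ relu(W_1 x) ⋯)`. -/
def feat (n : ℕ → ℕ) (W : ∀ i : ℕ, Matrix (Fin (n (i + 1))) (Fin (n i)) ℝ) :
    (j : ℕ) → (Fin (n 0) → ℝ) → (Fin (n j) → ℝ)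
  | 0, x => x
  | (j + 1), x => relu ((W j).mulVec (feat n W j x))

/-- The matrix product `∏_{i=j}^{1} W_{i,+,x}`. -/
def lam (n : ℕ → ℕ) (W : ∀ i : ℕ, Matrix (Fin (n (i + 1))) (Fin (n i)) ℝ) :
    (j : ℕ) → (Fin (n 0) → ℝ) → Matrix (Fin (n j)) (Fin (n 0)) ℝ
  | 0, _ => 1
  | (j + 1), x => rowFilter (W j) ((W j).mulVec (feat n W j x)) * lam n W j x

/-- The empirical risk `f(x) = (1/2)‖A G(x) − (A G(x_*) + e)‖²`. -/
def fobj {m : ℕ} (n : ℕ → ℕ) (W : ∀ i : ℕ, Matrix (Fin (n (i + 1))) (Fin (n i)) ℝ)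
    (d : ℕ) (A : Matrix (Fin m) (Fin (n d)) ℝ) (xs : Fin (n 0) → ℝ) (e : Fin m → ℝ)
    (x : Fin (n 0) → ℝ) : ℝ :=
  (1 / 2) * (enorm (A.mulVec (feat n W d x) - (A.mulVec (feat n W d xs) + e))) ^ 2

/-- `ṽ_x = (∏ W_{i,+,x})ᵀ Aᵀ (A (∏ W_{i,+,x}) x − y)`. -/
def vtil {m : ℕ} (n : ℕ → ℕ) (W : ∀ i : ℕ, Matrix (Fin (n (i + 1))) (Fin (n i)) ℝ)
    (d : ℕ) (A : Matrix (Fin m) (Fin (n d)) ℝ) (xs : Fin (n 0) → ℝ) (e : Fin m → ℝ)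
    (x : Fin (n 0) → ℝ) : Fin (n 0) → ℝ :=
  Matrix.mulVec (lam n W d x)ᵀ (Matrix.mulVec Aᵀ
    (A.mulVec ((lam n W d x).mulVec x) - (A.mulVec (feat n W d xs) + e)))

/-- `g(θ) = arccos((1/π)[(π−θ)cos θ + sin θ])`. -/
def gfun (θ : ℝ) : ℝ := Real.arccos ((1 / π) * ((π - θ) * Real.cos θ + Real.sin θ))

/-- `θ̄_{i,x,y}`. -/
def thetaBar {k : ℕ} (x y : Fin k → ℝ) : ℕ → ℝ
  | 0 => ang x y
  | (i + 1) => gfun (thetaBar x y i)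

/-- `h̃_{x,y}` for a `d`-layer network. -/
def htil {k : ℕ} (d : ℕ) (x y : Fin k → ℝ) : Fin k → ℝ :=
  (((2 : ℝ) ^ d)⁻¹ * ∏ i ∈ Finset.range d, (π - thetaBar x y i) / π) • y
    + (((2 : ℝ) ^ d)⁻¹ * ∑ i ∈ Finset.range d, (Real.sin (thetaBar x y i) / π)
        * ∏ j ∈ Finset.Ico (i + 1) d, (π - thetaBar x y j) / π) •
        (enorm y • (enorm x)⁻¹ • x)

/-- `h_{x,y} = 2^{−d} x − h̃_{x,y}`. -/
def hfun {k : ℕ} (d : ℕ) (x y : Fin k → ℝ) : Fin k → ℝ :=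
  ((2 : ℝ) ^ d)⁻¹ • x - htil d x y

/-- `θ̌_i` with `θ̌_0 = π`. -/
def thetaCheck : ℕ → ℝ
  | 0 => π
  | (i + 1) => gfun (thetaCheck i)

/-- `ρ_d`. -/
def rho (d : ℕ) : ℝ :=
  ∑ i ∈ Finset.range d, (Real.sin (thetaCheck i) / π)
    * ∏ j ∈ Finset.Ico (i + 1) d, (π - thetaCheck j) / π

/-- The expected risk `f^E`. -/
def fE {k : ℕ} (d : ℕ) (xs : Fin k → ℝ) (x : Fin k → ℝ) : ℝ :=
  ((2 : ℝ) ^ (d + 1))⁻¹ * dotp x x - dotp x (htil d x xs)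
    + ((2 : ℝ) ^ (d + 1))⁻¹ * dotp xs xs

/-- Closed ball of radius `r` about `z` in the Euclidean norm. -/
def cball {k : ℕ} (z : Fin k → ℝ) (r : ℝ) : Set (Fin k → ℝ) :=
  {x | enorm (x - z) ≤ r}

/-- The set `S_β`. -/
def Sset {k : ℕ} (d : ℕ) (xs : Fin k → ℝ) (β : ℝ) : Set (Fin k → ℝ) :=
  {x | x ≠ 0 ∧ enorm (hfun d x xs) ≤ ((2 : ℝ) ^ d)⁻¹ * β * max (enorm x) (enorm xs)}


lemma enorm_nonneg {m : ℕ} (v : Fin m → ℝ) : 0 ≤ enorm v := Real.sqrt_nonneg _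

lemma enorm_sq {m : ℕ} (v : Fin m → ℝ) : enorm v ^ 2 = ∑ i, (v i) ^ 2 :=
  Real.sq_sqrt (by positivity)

lemma dotp_self {m : ℕ} (v : Fin m → ℝ) : dotp v v = enorm v ^ 2 := by
  rw [enorm_sq]; exact Finset.sum_congr rfl fun i _ => (sq (v i)).symm

lemma abs_dotp_le {m : ℕ} (u v : Fin m → ℝ) : |dotp u v| ≤ enorm u * enorm v := by
  have h := Finset.sum_mul_sq_le_sq_mul_sq Finset.univ u v
  have h2 : (dotp u v) ^ 2 ≤ (enorm u * enorm v) ^ 2 := by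
    rw [mul_pow, enorm_sq, enorm_sq]; exact h
  calc |dotp u v| = Real.sqrt ((dotp u v) ^ 2) := (Real.sqrt_sq_eq_abs _).symm
    _ ≤ Real.sqrt ((enorm u * enorm v) ^ 2) := Real.sqrt_le_sqrt h2
    _ = enorm u * enorm v := by
        rw [Real.sqrt_sq (mul_nonneg (enorm_nonneg u) (enorm_nonneg v))]

lemma dotp_le {m : ℕ} (u v : Fin m → ℝ) : dotp u v ≤ enorm u * enorm v :=
  le_trans (le_abs_self _) (abs_dotp_le u v)

lemma enorm_pos {m : ℕ} {v : Fin m → ℝ} (hv : v ≠ 0) : 0 < enorm v := by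
  rcases Function.ne_iff.1 hv with ⟨i, hi⟩
  apply Real.sqrt_pos.2
  have : (0:ℝ) < v i ^ 2 := by have := abs_pos.2 hi; nlinarith [sq_abs (v i)]
  exact lt_of_lt_of_le this (Finset.single_le_sum (fun j _ => sq_nonneg (v j))
    (Finset.mem_univ i))

lemma enorm_smul {m : ℕ} (c : ℝ) (v : Fin m → ℝ) : enorm (c • v) = |c| * enorm v := by
  unfold enorm
  rw [← Real.sqrt_sq_eq_abs, ← Real.sqrt_mul (sq_nonneg c), Finset.mul_sum]
  congr 1
  exact Finset.sum_congr rfl fun i _ => by simp [mul_pow]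

lemma enorm_sub_comm {m : ℕ} (u v : Fin m → ℝ) : enorm (u - v) = enorm (v - u) := by
  unfold enorm; congr 1; exact Finset.sum_congr rfl fun i _ => by
    simp only [Pi.sub_apply]; ring

lemma enorm_eq_norm {m : ℕ} (v : Fin m → ℝ) :
    ‖(WithLp.equiv 2 (Fin m → ℝ)).symm v‖ = enorm v := by
  rw [EuclideanSpace.norm_eq]
  unfold enorm
  congr 1
  exact Finset.sum_congr rfl fun i _ => by
    rw [WithLp.equiv_symm_apply, WithLp.ofLp_toLp, Real.norm_eq_abs, sq_abs]

lemma specNorm_nonneg {n k : ℕ} (M : Matrix (Fin n) (Fin k) ℝ) : 0 ≤ specNorm M :=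
  norm_nonneg _

lemma specNorm_le_of_bound {n k : ℕ} (M : Matrix (Fin n) (Fin k) ℝ) {C : ℝ}
    (hC : 0 ≤ C) (h : ∀ v, enorm (M.mulVec v) ≤ C * enorm v) : specNorm M ≤ C := by
  refine ContinuousLinearMap.opNorm_le_bound _ hC fun v => ?_
  rw [LinearMap.coe_toContinuousLinearMap']
  have e1 : ‖Matrix.toEuclideanLin M v‖ = enorm (M.mulVec (WithLp.equiv 2 (Fin k → ℝ) v)) := by
    rw [Matrix.toEuclideanLin_apply]; exact enorm_eq_norm _
  have e2 : ‖v‖ = enorm (WithLp.equiv 2 (Fin k → ℝ) v) := by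
    rw [← enorm_eq_norm]; simp
  rw [e1, e2]
  exact h _

lemma enorm_mulVec_le {n k : ℕ} (M : Matrix (Fin n) (Fin k) ℝ) (v : Fin k → ℝ) :
    enorm (M.mulVec v) ≤ specNorm M * enorm v := by
  have h := ContinuousLinearMap.le_opNorm
    (LinearMap.toContinuousLinearMap (Matrix.toEuclideanLin M))
    ((WithLp.equiv 2 (Fin k → ℝ)).symm v)
  rw [LinearMap.coe_toContinuousLinearMap'] at h
  rw [← enorm_eq_norm, ← enorm_eq_norm]
  exact h

lemma specNorm_add_le {n k : ℕ} (A B : Matrix (Fin n) (Fin k) ℝ) :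
    specNorm (A + B) ≤ specNorm A + specNorm B := by
  unfold specNorm
  rw [map_add, map_add]
  exact norm_add_le _ _

lemma specNorm_neg {n k : ℕ} (A : Matrix (Fin n) (Fin k) ℝ) :
    specNorm (-A) = specNorm A := by
  unfold specNorm; rw [map_neg, map_neg, norm_neg]

lemma specNorm_sub_le {n k : ℕ} (A B : Matrix (Fin n) (Fin k) ℝ) :
    specNorm (A - B) ≤ specNorm A + specNorm B := by
  rw [sub_eq_add_neg]
  exact le_trans (specNorm_add_le A (-B)) (by rw [specNorm_neg])

lemma specNorm_smul {n k : ℕ} (c : ℝ) (A : Matrix (Fin n) (Fin k) ℝ) :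
    specNorm (c • A) = |c| * specNorm A := by
  unfold specNorm
  rw [_root_.map_smul, _root_.map_smul]
  exact (norm_smul c (LinearMap.toContinuousLinearMap (Matrix.toEuclideanLin A))).trans
    (by rw [Real.norm_eq_abs])

lemma specNorm_one_le {k : ℕ} : specNorm (1 : Matrix (Fin k) (Fin k) ℝ) ≤ 1 :=
  specNorm_le_of_bound _ zero_le_one fun v => by rw [Matrix.one_mulVec, one_mul]

lemma vecMulVec_mulVec {m : ℕ} (u w z : Fin m → ℝ) :
    (Matrix.vecMulVec u w).mulVec z = (dotp w z) • u := by
  ext i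
  simp only [Matrix.mulVec, Matrix.vecMulVec_apply, dotProduct, dotp,
    Pi.smul_apply, smul_eq_mul, Finset.sum_mul, Finset.mul_sum]
  exact Finset.sum_congr rfl fun j _ => by ring

lemma sum_sq_expand {m : ℕ} (α β γ : ℝ) (u w z : Fin m → ℝ) :
    ∑ i, (α * u i + β * w i + γ * z i) ^ 2
      = α ^ 2 * (∑ i, u i ^ 2) + β ^ 2 * (∑ i, w i ^ 2) + γ ^ 2 * (∑ i, z i ^ 2)
        + 2 * α * β * (∑ i, u i * w i) + 2 * α * γ * (∑ i, u i * z i)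
        + 2 * β * γ * (∑ i, w i * z i) := by
  simp only [Finset.mul_sum, ← Finset.sum_add_distrib]
  exact Finset.sum_congr rfl fun i _ => by ring

lemma specNorm_swapMat_le {k : ℕ} {x y : Fin k → ℝ} (hx : x ≠ 0) (hy : y ≠ 0) :
    specNorm (swapMat x y) ≤ 1 := by
  set xh := (enorm x)⁻¹ • x with hxh
  set yh := (enorm y)⁻¹ • y with hyh
  have hxh1 : enorm xh = 1 := by
    rw [hxh, enorm_smul, abs_of_nonneg (inv_nonneg.2 (enorm_nonneg x)),
      inv_mul_cancel₀ (ne_of_gt (enorm_pos hx))]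
  have hyh1 : enorm yh = 1 := by
    rw [hyh, enorm_smul, abs_of_nonneg (inv_nonneg.2 (enorm_nonneg y)),
      inv_mul_cancel₀ (ne_of_gt (enorm_pos hy))]
  have hxs : ∑ i, xh i ^ 2 = 1 := by rw [← enorm_sq, hxh1]; norm_num
  have hys : ∑ i, yh i ^ 2 = 1 := by rw [← enorm_sq, hyh1]; norm_num
  set c := dotp xh yh with hc
  have hcabs : |c| ≤ 1 := by
    have := abs_dotp_le xh yh; rwa [hxh1, hyh1, one_mul] at this
  apply specNorm_le_of_bound _ zero_le_one
  intro z
  rw [one_mul]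
  set a := dotp xh z with ha
  set b := dotp yh z with hb
  have hZ : ∑ i, z i ^ 2 = enorm z ^ 2 := (enorm_sq z).symm
  show enorm ((swapMat x y).mulVec z) ≤ enorm z
  rw [swapMat]
  simp only [← hxh, ← hyh, ← hc]
  split_ifs with h1 h2
  · rw [vecMulVec_mulVec, enorm_smul]
    calc |dotp xh z| * enorm xh ≤ (enorm xh * enorm z) * enorm xh := by
          exact mul_le_mul_of_nonneg_right (abs_dotp_le xh z) (enorm_nonneg xh)
      _ = enorm z := by rw [hxh1]; ring
  · rw [Matrix.neg_mulVec, vecMulVec_mulVec]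
    have : enorm (-(dotp xh z • xh)) = |dotp xh z| * enorm xh := by
      rw [show -(dotp xh z • xh) = (-(dotp xh z)) • xh by ext i; simp, enorm_smul, abs_neg]
    rw [this]
    calc |dotp xh z| * enorm xh ≤ (enorm xh * enorm z) * enorm xh := by
          exact mul_le_mul_of_nonneg_right (abs_dotp_le xh z) (enorm_nonneg xh)
      _ = enorm z := by rw [hxh1]; ring
  · -- generic case
    have hclt : c ^ 2 < 1 := by
      rcases lt_or_eq_of_le hcabs with h | h
      · nlinarith [sq_abs c, abs_nonneg c]
      · exfalso
        rcases (abs_eq zero_le_one).1 h with h' | h'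
        · exact h1 h'
        · exact h2 h'
    set d : ℝ := 1 - c ^ 2 with hd
    have hdpos : 0 < d := by rw [hd]; linarith
    set u : ℝ := a - c * b with hu
    set v : ℝ := b - c * a with hv
    have hform : (d⁻¹ • (Matrix.vecMulVec xh yh + Matrix.vecMulVec yh xh
        - c • (Matrix.vecMulVec xh xh + Matrix.vecMulVec yh yh))).mulVec z
        = fun i => (d⁻¹ * v) * xh i + (d⁻¹ * u) * yh i + 0 * z i := by
      rw [Matrix.smul_mulVec, Matrix.sub_mulVec, Matrix.add_mulVec,
        Matrix.smul_mulVec, Matrix.add_mulVec, vecMulVec_mulVec, vecMulVec_mulVec,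
        vecMulVec_mulVec, vecMulVec_mulVec]
      ext i
      simp only [Pi.smul_apply, Pi.add_apply, Pi.sub_apply, smul_eq_mul, ← ha, ← hb]
      rw [hu, hv]
      ring
    rw [hform]
    have hza : ∑ i, z i * xh i = a := by
      rw [ha]; unfold dotp; exact Finset.sum_congr rfl fun i _ => mul_comm _ _
    have hzb : ∑ i, z i * yh i = b := by
      rw [hb]; unfold dotp; exact Finset.sum_congr rfl fun i _ => mul_comm _ _
    have hza' : ∑ i, xh i * z i = a := rfl
    have hzb' : ∑ i, yh i * z i = b := rfl
    have hxy : ∑ i, xh i * yh i = c := rfl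
    have hN := Finset.sum_nonneg (fun i (_ : i ∈ Finset.univ) =>
      sq_nonneg (d * z i + (-u) * xh i + (-v) * yh i))
    rw [sum_sq_expand d (-u) (-v) z xh yh, hZ, hxs, hys, hza, hzb, hxy] at hN
    have hid : u ^ 2 + v ^ 2 + 2 * u * v * c = d * (u * a + v * b) := by
      rw [hu, hv, hd]; ring
    have key : u ^ 2 + v ^ 2 + 2 * u * v * c ≤ d ^ 2 * enorm z ^ 2 := by nlinarith [hN, hid]
    have hfin : (d⁻¹) ^ 2 * (u ^ 2 + v ^ 2 + 2 * u * v * c)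
        ≤ (d⁻¹) ^ 2 * (d ^ 2 * enorm z ^ 2) := by
      exact mul_le_mul_of_nonneg_left key (sq_nonneg _)
    have hcan : (d⁻¹) ^ 2 * (d ^ 2 * enorm z ^ 2) = enorm z ^ 2 := by
      field_simp
    have hbound : ∑ i, ((d⁻¹ * v) * xh i + (d⁻¹ * u) * yh i + 0 * z i) ^ 2
        ≤ enorm z ^ 2 := by
      rw [sum_sq_expand, hxs, hys, hxy, hza', hzb', hZ]
      linarith [hfin, hcan]
    calc enorm (fun i => (d⁻¹ * v) * xh i + (d⁻¹ * u) * yh i + 0 * z i)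
        = Real.sqrt (∑ i, ((d⁻¹ * v) * xh i + (d⁻¹ * u) * yh i + 0 * z i) ^ 2) := rfl
      _ ≤ Real.sqrt (enorm z ^ 2) := Real.sqrt_le_sqrt hbound
      _ = enorm z := Real.sqrt_sq (enorm_nonneg z)

lemma ang_nonneg {k : ℕ} (x y : Fin k → ℝ) : 0 ≤ ang x y := Real.arccos_nonneg _

lemma ang_comm {k : ℕ} (x y : Fin k → ℝ) : ang x y = ang y x := by
  unfold ang
  rw [show dotp x y = dotp y x from Finset.sum_congr rfl fun i _ => mul_comm _ _,
    mul_comm (enorm x) (enorm y)]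

lemma ang_self {k : ℕ} {x : Fin k → ℝ} (hx : x ≠ 0) : ang x x = 0 := by
  unfold ang
  rw [dotp_self, sq, div_self (ne_of_gt (mul_pos (enorm_pos hx) (enorm_pos hx)))]
  exact Real.arccos_one

lemma specNorm_Qdiff {k : ℕ} {x y : Fin k → ℝ} (hx : x ≠ 0) (hy : y ≠ 0) :
    specNorm (Qmat x x - Qmat x y) ≤ ang x y := by
  set θ := ang x y with hθ
  have hθ0 : 0 ≤ θ := ang_nonneg x y
  have hθπ : θ ≤ π := Real.arccos_le_pi _
  have hdecomp : Qmat x x - Qmat x y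
      = (θ / (2 * π)) • (1 : Matrix (Fin k) (Fin k) ℝ)
        + (-(Real.sin θ / (2 * π))) • swapMat x y := by
    unfold Qmat
    rw [ang_self hx, ← hθ]
    simp only [Real.sin_zero, zero_div, zero_smul, add_zero, sub_zero]
    module
  rw [hdecomp]
  have hs1 : specNorm ((θ / (2 * π)) • (1 : Matrix (Fin k) (Fin k) ℝ)) ≤ θ / (2 * π) := by
    rw [specNorm_smul, abs_of_nonneg (by positivity)]
    calc θ / (2 * π) * specNorm (1 : Matrix (Fin k) (Fin k) ℝ)
        ≤ θ / (2 * π) * 1 := by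
          exact mul_le_mul_of_nonneg_left specNorm_one_le (by positivity)
      _ = θ / (2 * π) := mul_one _
  have hsn : 0 ≤ Real.sin θ / (2 * π) :=
    div_nonneg (Real.sin_nonneg_of_nonneg_of_le_pi hθ0 hθπ) (by positivity)
  have hs2 : specNorm ((-(Real.sin θ / (2 * π))) • swapMat x y) ≤ Real.sin θ / (2 * π) := by
    rw [specNorm_smul, abs_neg, abs_of_nonneg hsn]
    calc Real.sin θ / (2 * π) * specNorm (swapMat x y)
        ≤ Real.sin θ / (2 * π) * 1 := mul_le_mul_of_nonneg_left (specNorm_swapMat_le hx hy) hsn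
      _ = Real.sin θ / (2 * π) := mul_one _
  have hsum : θ / (2 * π) + Real.sin θ / (2 * π) ≤ θ := by
    have hsin : Real.sin θ ≤ θ := Real.sin_le hθ0
    have hπ : (3:ℝ) < π := Real.pi_gt_three
    rw [← add_div, div_le_iff₀ (by linarith : (0:ℝ) < 2 * π)]
    nlinarith [mul_nonneg hθ0 (by linarith : (0:ℝ) ≤ 2 * π - 2)]
  exact le_trans (specNorm_add_le _ _) (le_trans (add_le_add hs1 hs2) hsum)

lemma part_i {n k : ℕ} {W : Matrix (Fin n) (Fin k) ℝ} {ε : ℝ} (hW : WDC W ε)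
    (x y : Fin k → ℝ) (hx : x ≠ 0) (hy : y ≠ 0) :
    specNorm ((posPart W x)ᵀ * (posPart W x - posPart W y)) ≤ 2 * ε + ang x y := by
  have h1 := hW x x hx hx
  have h2 := hW x y hx hy
  have hq := specNorm_Qdiff hx hy
  have hdecomp : (posPart W x)ᵀ * (posPart W x - posPart W y)
      = ((posPart W x)ᵀ * posPart W x - Qmat x x)
        - ((posPart W x)ᵀ * posPart W y - Qmat x y) + (Qmat x x - Qmat x y) := by
    rw [Matrix.mul_sub]; abel
  rw [hdecomp]
  calc specNorm _ ≤ specNorm (((posPart W x)ᵀ * posPart W x - Qmat x x)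
        - ((posPart W x)ᵀ * posPart W y - Qmat x y)) + specNorm (Qmat x x - Qmat x y) :=
        specNorm_add_le _ _
    _ ≤ specNorm ((posPart W x)ᵀ * posPart W x - Qmat x x)
        + specNorm ((posPart W x)ᵀ * posPart W y - Qmat x y)
        + specNorm (Qmat x x - Qmat x y) := by
        exact add_le_add_left (specNorm_sub_le _ _) _
    _ ≤ ε + ε + ang x y := by
        exact add_le_add (add_le_add h1 h2) hq
    _ = 2 * ε + ang x y := by ring

lemma rowFilter_mulVec {n k : ℕ} (W : Matrix (Fin n) (Fin k) ℝ) (u : Fin n → ℝ)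
    (v : Fin k → ℝ) (i : Fin n) :
    ((rowFilter W u).mulVec v) i = if 0 < u i then (W.mulVec v) i else 0 := by
  simp only [rowFilter, Matrix.mulVec, dotProduct]
  split_ifs with h
  · rfl
  · simp

lemma sign_lemma {n k : ℕ} (W : Matrix (Fin n) (Fin k) ℝ) (x y : Fin k → ℝ) (i : Fin n) :
    ((posPart W x - posPart W y).mulVec y) i * ((posPart W x - posPart W y).mulVec x) i ≤ 0 := by
  rw [Matrix.sub_mulVec, Matrix.sub_mulVec]
  simp only [Pi.sub_apply]
  unfold posPart
  rw [rowFilter_mulVec, rowFilter_mulVec, rowFilter_mulVec, rowFilter_mulVec]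
  set a := (W.mulVec x) i
  set b := (W.mulVec y) i
  split_ifs with h1 h2 h2
  · simp
  · push_neg at h2
    nlinarith
  · push_neg at h1
    nlinarith
  · simp

lemma enorm_sq_dotp {m : ℕ} (v : Fin m → ℝ) : enorm v ^ 2 = dotp v v := (dotp_self v).symm

lemma part_ii_aux {n k : ℕ} (D : Matrix (Fin n) (Fin k) ℝ) (w : Fin k → ℝ) :
    enorm (D.mulVec w) ^ 2 ≤ specNorm (Dᵀ * D) * enorm w ^ 2 := by
  have h1 : enorm (D.mulVec w) ^ 2 = dotp ((Dᵀ * D).mulVec w) w := by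
    rw [enorm_sq_dotp]
    calc dotp (D.mulVec w) (D.mulVec w) = (D.mulVec w) ⬝ᵥ (D.mulVec w) := rfl
      _ = ((D.mulVec w) ᵥ* D) ⬝ᵥ w := Matrix.dotProduct_mulVec _ _ _
      _ = (Dᵀ.mulVec (D.mulVec w)) ⬝ᵥ w := by rw [Matrix.mulVec_transpose]
      _ = ((Dᵀ * D).mulVec w) ⬝ᵥ w := by rw [Matrix.mulVec_mulVec]
  rw [h1]
  calc dotp ((Dᵀ * D).mulVec w) w ≤ enorm ((Dᵀ * D).mulVec w) * enorm w := dotp_le _ _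
    _ ≤ (specNorm (Dᵀ * D) * enorm w) * enorm w :=
        mul_le_mul_of_nonneg_right (enorm_mulVec_le _ _) (enorm_nonneg w)
    _ = specNorm (Dᵀ * D) * enorm w ^ 2 := by ring

lemma part_ii {n k : ℕ} {W : Matrix (Fin n) (Fin k) ℝ} {ε : ℝ} (hW : WDC W ε)
    (x y : Fin k → ℝ) (hx : x ≠ 0) (hy : y ≠ 0) :
    enorm ((posPart W x - posPart W y).mulVec y) ^ 2
      ≤ 2 * (2 * ε + ang x y) * enorm (x - y) ^ 2 := by
  set D := posPart W x - posPart W y with hD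
  have hε : 0 ≤ ε := le_trans (specNorm_nonneg _) (hW x x hx hx)
  have hθ0 : 0 ≤ ang x y := ang_nonneg x y
  have hCnn : 0 ≤ 2 * (2 * ε + ang x y) := by linarith
  -- spectral bound on DᵀD
  have hDtD : specNorm (Dᵀ * D) ≤ 2 * (2 * ε + ang x y) := by
    have hdecomp : Dᵀ * D = (posPart W x)ᵀ * (posPart W x - posPart W y)
        + (posPart W y)ᵀ * (posPart W y - posPart W x) := by
      rw [hD, Matrix.transpose_sub, Matrix.sub_mul, Matrix.mul_sub, Matrix.mul_sub,
        Matrix.mul_sub]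
      abel
    rw [hdecomp]
    have ha := part_i hW x y hx hy
    have hb := part_i hW y x hy hx
    rw [ang_comm y x] at hb
    calc specNorm _ ≤ specNorm ((posPart W x)ᵀ * (posPart W x - posPart W y))
          + specNorm ((posPart W y)ᵀ * (posPart W y - posPart W x)) := specNorm_add_le _ _
      _ ≤ (2 * ε + ang x y) + (2 * ε + ang x y) := add_le_add ha hb
      _ = 2 * (2 * ε + ang x y) := by ring
  -- enorm (D y) ≤ enorm (D (y - x))
  have hkey : enorm (D.mulVec y) ≤ enorm (D.mulVec (y - x)) := by
    have hs : enorm (D.mulVec y) ^ 2 ≤ dotp (D.mulVec y) (D.mulVec (y - x)) := by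
      rw [enorm_sq_dotp, Matrix.mulVec_sub]
      unfold dotp
      rw [show ∀ (f g : Fin n → ℝ), ∑ i, f i * (f - g) i = ∑ i, (f i * f i - f i * g i)
          from fun f g => Finset.sum_congr rfl fun i _ => by simp [Pi.sub_apply]; ring,
        Finset.sum_sub_distrib]
      have : ∑ i, (D.mulVec y) i * (D.mulVec x) i ≤ 0 :=
        Finset.sum_nonpos fun i _ => by rw [hD]; exact sign_lemma W x y i
      linarith
    have hcs : dotp (D.mulVec y) (D.mulVec (y - x))
        ≤ enorm (D.mulVec y) * enorm (D.mulVec (y - x)) := dotp_le _ _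
    rcases eq_or_lt_of_le (enorm_nonneg (D.mulVec y)) with h0 | hpos
    · rw [← h0]; exact enorm_nonneg _
    · have := le_trans hs hcs
      rw [sq] at this
      exact le_of_mul_le_mul_left this hpos
  calc enorm (D.mulVec y) ^ 2 ≤ enorm (D.mulVec (y - x)) ^ 2 := by
        exact pow_le_pow_left₀ (enorm_nonneg _) hkey 2
    _ ≤ specNorm (Dᵀ * D) * enorm (y - x) ^ 2 := part_ii_aux D (y - x)
    _ ≤ 2 * (2 * ε + ang x y) * enorm (y - x) ^ 2 :=
        mul_le_mul_of_nonneg_right hDtD (sq_nonneg _)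
    _ = 2 * (2 * ε + ang x y) * enorm (x - y) ^ 2 := by rw [enorm_sub_comm]


theorem statement_16 (n k : ℕ) (W : Matrix (Fin n) (Fin k) ℝ) (ε : ℝ)
    (hW : WDC W ε) :
    ∀ x y : Fin k → ℝ, x ≠ 0 → y ≠ 0 →
      specNorm ((posPart W x)ᵀ * (posPart W x - posPart W y)) ≤ 2 * ε + ang x y
      ∧ enorm ((posPart W x - posPart W y).mulVec y) ^ 2
          ≤ 2 * (2 * ε + ang x y) * enorm (x - y) ^ 2 := by
  intro x y hx hy
  exact ⟨part_i hW x y hx hy, part_ii hW x y hx hy⟩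

end CSGen
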